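/- Asymptotics of the sharp C_p-constant (Proposition 2.10, second assertion): c₁(p) → 0 as p → ∞. -/

import Mathlib

/-- The sharp constant `c₁(p)` in the lower bound for the `C_p` functional:
the infimum over `(s,t) ≠ (0,0)` of `[(t²+s²+2s+1)^{p/2} - 1 - ps] / (t²+s²)^{p/2}`. -/
noncomputable def c1 (p : ℝ) : ℝ :=
  sInf { r : ℝ | ∃ s t : ℝ, ¬(s = 0 ∧ t = 0) ∧
    r = ((t ^ 2 + s ^ 2 + 2 * s + 1) ^ (p / 2) - 1 - p * s) / (t ^ 2 + s ^ 2) ^ (p / 2) }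

lemma c1_set_nonneg {p : ℝ} (hp : 2 ≤ p) {r : ℝ}
    (hr : r ∈ { r : ℝ | ∃ s t : ℝ, ¬(s = 0 ∧ t = 0) ∧
      r = ((t ^ 2 + s ^ 2 + 2 * s + 1) ^ (p / 2) - 1 - p * s) / (t ^ 2 + s ^ 2) ^ (p / 2) }) :
    0 ≤ r := by
  obtain ⟨s, t, -, rfl⟩ := hr
  apply div_nonneg _ (Real.rpow_nonneg (by positivity) _)
  rw [sub_sub, sub_nonneg]
  rcases le_or_gt (-1) s with hs | hs
  · calc 1 + p * s ≤ (1 + s) ^ p := one_add_mul_self_le_rpow_one_add hs (by linarith)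
      _ = ((1 + s) ^ (2:ℕ)) ^ (p / 2) := by
          rw [← Real.rpow_natCast (1 + s) 2, ← Real.rpow_mul (by linarith)]
          norm_num
          congr 1
          ring
      _ ≤ (t ^ 2 + s ^ 2 + 2 * s + 1) ^ (p / 2) := by
          apply Real.rpow_le_rpow (by positivity) (by nlinarith) (by linarith)
  · have h1 : p * s ≤ 2 * s := by nlinarith
    have : 1 + p * s ≤ 0 := by nlinarith
    exact this.trans (Real.rpow_nonneg (by nlinarith [sq_nonneg (s+1), sq_nonneg t]) _)

lemma c1_nonneg {p : ℝ} (hp : 2 ≤ p) : 0 ≤ c1 p := by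
  apply le_csInf
  · exact ⟨_, -2, 0, by norm_num, rfl⟩
  · exact fun r hr => c1_set_nonneg hp hr

lemma c1_le {p : ℝ} (hp : 2 ≤ p) : c1 p ≤ 2 * p / (2:ℝ) ^ p := by
  apply csInf_le ⟨0, fun r hr => c1_set_nonneg hp hr⟩
  refine ⟨-2, 0, by norm_num, ?_⟩
  have h4 : ((4:ℝ)) ^ (p / 2) = (2:ℝ) ^ p := by
    rw [show (4:ℝ) = (2:ℝ) ^ (2:ℝ) by norm_num [Real.rpow_natCast], ← Real.rpow_mul (by norm_num)]
    congr 1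
    ring
  norm_num [h4]
  ring

/-- Asymptotics of the sharp `C_p`-constant: `c₁(p) → 0` as `p → ∞`. -/
theorem c1_tendsto_zero : Filter.Tendsto c1 Filter.atTop (nhds 0) := by
  have hlog : (0:ℝ) < Real.log 2 := Real.log_pos (by norm_num)
  have hub : Filter.Tendsto (fun p : ℝ => 2 * p / (2:ℝ) ^ p) Filter.atTop (nhds 0) := by
    have h1 : Filter.Tendsto (fun x : ℝ => x * Real.exp (-x)) Filter.atTop (nhds 0) := by
      simpa using Real.tendsto_pow_mul_exp_neg_atTop_nhds_zero 1
    have h2 : Filter.Tendsto (fun p : ℝ => Real.log 2 * p) Filter.atTop Filter.atTop :=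
      Filter.tendsto_id.const_mul_atTop hlog
    have h3 := (h1.comp h2).const_mul (2 / Real.log 2)
    rw [mul_zero] at h3
    apply h3.congr
    intro p
    have he : Real.exp (-(Real.log 2 * p)) = ((2:ℝ) ^ p)⁻¹ := by
      rw [Real.exp_neg, ← Real.rpow_def_of_pos two_pos]
    simp only [Function.comp_apply]
    rw [he]
    have h2p : ((2:ℝ) ^ p) ≠ 0 := (Real.rpow_pos_of_pos two_pos p).ne'
    field_simp
  apply squeeze_zero' (Filter.eventually_atTop.mpr ⟨2, fun p hp => c1_nonneg hp⟩)
    (Filter.eventually_atTop.mpr ⟨2, fun p hp => c1_le hp⟩) hub
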